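/- arXiv:1906.08965 — 2 statements merged into one kernel-verified Lean document; each statement's English description precedes it below -/
import Mathlib

section
/- The series Θ_ρ := Σ_{j∈ℤ} 2^{−j} ln θ_{j−1,ρ} converges absolutely. For every A ∈ ℝ, the sequence (α_n(A,ρ))_{n∈ℤ} is positive, satisfies the recurrence α_{n+1}(A,ρ) = θ_{n,ρ}·α_n(A,ρ)² for all n ∈ ℤ, and satisfies the asymptotics α_n(A,ρ) = 1 + (−A − Θ_ρ)·2^n + o(2^n) as n → −∞. Conversely, every positive sequence (α_n)_{n∈ℤ} satisfying α_{n+1} = θ_{n,ρ}·α_n² for all n ∈ ℤ equals (α_n(A,ρ))_{n∈ℤ} for a unique A ∈ ℝ. -/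
open Filter Topology Asymptotics MeasureTheory

noncomputable section

/-- `ζ_{n,ρ} = ln 2 · k(2^{n+ρ}) / (2^{n+ρ} · γ(2^{n+ρ+1}))`. -/
def zeta (k γ : ℝ → ℝ) (ρ : ℝ) (n : ℤ) : ℝ :=
  Real.log 2 * k ((2:ℝ) ^ ((n:ℝ) + ρ)) / ((2:ℝ) ^ ((n:ℝ) + ρ) * γ ((2:ℝ) ^ ((n:ℝ) + ρ + 1)))

/-- `θ_{n,ρ} = 2 ζ_{n+1,ρ} / ζ_{n,ρ}`. -/
def thetaF (k γ : ℝ → ℝ) (ρ : ℝ) (n : ℤ) : ℝ :=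
  2 * zeta k γ ρ (n + 1) / zeta k γ ρ n

/-- `α_n(A,ρ) = exp(−A·2^n)·exp(−2^n·Σ_{j=n+1}^∞ 2^{−j} ln θ_{j−1,ρ})`
(the tail series is re-indexed by `j = n + 1 + m`, `m ∈ ℕ`). -/
def alphaF (k γ : ℝ → ℝ) (ρ A : ℝ) (n : ℤ) : ℝ :=
  Real.exp (-(A * (2:ℝ) ^ n)) *
    Real.exp (-((2:ℝ) ^ n *
      ∑' m : ℕ, (2:ℝ) ^ (-(n + 1 + (m:ℤ))) * Real.log (thetaF k γ ρ (n + (m:ℤ)))))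

/-- `a_n(A,ρ) = 2 ζ_{n,ρ}⁻¹ α_n(A,ρ)`. -/
def aF (k γ : ℝ → ℝ) (ρ A : ℝ) (n : ℤ) : ℝ := 2 * (zeta k γ ρ n)⁻¹ * alphaF k γ ρ A n

open Filter Topology Asymptotics
open Filter Topology Asymptotics

lemma aux_abs_log_le {t : ℝ} (ht : 1/2 ≤ t) : |Real.log t| ≤ 2 * |t - 1| := by
  have ht0 : 0 < t := lt_of_lt_of_le (by norm_num) ht
  rcases le_total 1 t with h | h
  · rw [abs_of_nonneg (Real.log_nonneg h), abs_of_nonneg (by linarith)]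
    have := Real.log_le_sub_one_of_pos ht0; linarith
  · rw [abs_of_nonpos (Real.log_nonpos (by linarith) h), abs_of_nonpos (by linarith)]
    have h2 : Real.log t⁻¹ ≤ t⁻¹ - 1 := Real.log_le_sub_one_of_pos (by positivity)
    rw [Real.log_inv] at h2
    have key : t * t⁻¹ = 1 := mul_inv_cancel₀ (ne_of_gt ht0)
    nlinarith [mul_nonneg (by linarith : (0:ℝ) ≤ 2*t - 1) (by linarith : (0:ℝ) ≤ 1 - t)]

lemma log_bound_near_zero {F : ℝ → ℝ} {F₀ e : ℝ} (hF₀ : 0 < F₀) (he : 0 < e)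
    (hpos : ∀ ξ : ℝ, 0 < ξ → 0 < F ξ)
    (hO : (fun ξ : ℝ => F ξ - F₀) =O[𝓝[>] (0:ℝ)] fun ξ : ℝ => ξ ^ e) :
    ∃ C > 0, ∃ ε > 0, ∀ y : ℝ, 0 < y → y < ε →
      |Real.log (F y) - Real.log F₀| ≤ C * y ^ e := by
  obtain ⟨c, hc⟩ := hO.bound
  set C := max c 1 with hC
  have hC0 : 0 < C := lt_of_lt_of_le one_pos (le_max_right _ _)
  have h1 : ∀ᶠ ξ in 𝓝[>] (0:ℝ), |F ξ - F₀| ≤ C * ξ ^ e := by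
    filter_upwards [hc, self_mem_nhdsWithin] with ξ hξ hξ0
    have hξ0 : (0:ℝ) < ξ := hξ0
    have hre : (0:ℝ) ≤ ξ ^ e := Real.rpow_nonneg hξ0.le e
    calc |F ξ - F₀| = ‖F ξ - F₀‖ := rfl
      _ ≤ c * ‖ξ ^ e‖ := hξ
      _ = c * ξ ^ e := by rw [Real.norm_eq_abs, abs_of_nonneg hre]
      _ ≤ C * ξ ^ e := by gcongr; exact le_max_left _ _
  have htend : Tendsto (fun ξ : ℝ => C * ξ ^ e) (𝓝[>] (0:ℝ)) (𝓝 0) := by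
    have h0 : ContinuousAt (fun ξ : ℝ => ξ ^ e) 0 :=
      Real.continuousAt_rpow_const 0 e (Or.inr he.le)
    have h0' : Tendsto (fun ξ : ℝ => ξ ^ e) (𝓝[>] (0:ℝ)) (𝓝 ((0:ℝ) ^ e)) :=
      h0.tendsto.mono_left nhdsWithin_le_nhds
    have := h0'.const_mul C
    simpa [Real.zero_rpow (ne_of_gt he)] using this
  have h2 : ∀ᶠ ξ in 𝓝[>] (0:ℝ), C * ξ ^ e < F₀/2 :=
    htend.eventually_lt_const (by positivity)
  have h3 : ∀ᶠ ξ in 𝓝[>] (0:ℝ), |Real.log (F ξ) - Real.log F₀| ≤ (2 * C / F₀) * ξ ^ e := by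
    filter_upwards [h1, h2, self_mem_nhdsWithin] with ξ hb hsm hξ0
    have hξ0 : (0:ℝ) < ξ := hξ0
    have hFξ : 0 < F ξ := hpos ξ hξ0
    have hq : 1/2 ≤ F ξ / F₀ := by
      rw [le_div_iff₀ hF₀]
      have : |F ξ - F₀| ≤ F₀ / 2 := hb.trans (by linarith)
      have := abs_le.1 this
      linarith [this.1]
    have hlog : Real.log (F ξ) - Real.log F₀ = Real.log (F ξ / F₀) :=
      (Real.log_div (ne_of_gt hFξ) (ne_of_gt hF₀)).symm
    rw [hlog]
    calc |Real.log (F ξ / F₀)| ≤ 2 * |F ξ / F₀ - 1| := aux_abs_log_le hq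
      _ = 2 * (|F ξ - F₀| / F₀) := by
          rw [div_sub_one (ne_of_gt hF₀), abs_div, abs_of_pos hF₀]
      _ ≤ 2 * ((C * ξ ^ e) / F₀) := by gcongr
      _ = (2 * C / F₀) * ξ ^ e := by ring
  rw [Filter.eventually_iff] at h3
  obtain ⟨u, hu, hsub⟩ := mem_nhdsGT_iff_exists_Ioo_subset.mp h3
  exact ⟨2 * C / F₀, by positivity, u, hu, fun y hy0 hyu => hsub ⟨hy0, hyu⟩⟩

lemma ratio_bound_at_top {F : ℝ → ℝ} {p : ℝ}
    (hlim : Tendsto (fun ξ : ℝ => F ξ / ξ ^ p) atTop (𝓝 1)) :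
    ∃ R ≥ (1:ℝ), ∀ ξ ≥ R, (1/2) * ξ ^ p ≤ F ξ ∧ F ξ ≤ (3/2) * ξ ^ p := by
  have h := Metric.tendsto_nhds.mp hlim (1/2) (by norm_num)
  rw [eventually_atTop] at h
  obtain ⟨R₀, hR₀⟩ := h
  refine ⟨max R₀ 1, le_max_right _ _, fun ξ hξ => ?_⟩
  have hξ1 : (1:ℝ) ≤ ξ := le_trans (le_max_right _ _) hξ
  have hξ0 : (0:ℝ) < ξ := lt_of_lt_of_le one_pos hξ1
  have hp : (0:ℝ) < ξ ^ p := Real.rpow_pos_of_pos hξ0 p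
  have hd := hR₀ ξ (le_trans (le_max_left _ _) hξ)
  rw [Real.dist_eq] at hd
  have := abs_le.1 hd.le
  have hF : F ξ = (F ξ / ξ ^ p) * ξ ^ p := by field_simp
  constructor
  · rw [hF]; nlinarith [this.1]
  · rw [hF]; nlinarith [this.2]
open Filter Topology Asymptotics


lemma rpow_succ (s : ℝ) : (2:ℝ) ^ (s + 1) = 2 * (2:ℝ) ^ s := by
  rw [Real.rpow_add two_pos, Real.rpow_one]; ring

lemma zeta_pos' {k γ : ℝ → ℝ} {ρ : ℝ} (hk_pos : ∀ ξ : ℝ, 0 ≤ ξ → 0 < k ξ)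
    (hγ_pos : ∀ ξ : ℝ, 0 < ξ → 0 < γ ξ) (n : ℤ) : 0 < zeta k γ ρ n := by
  have h1 : (0:ℝ) < (2:ℝ) ^ ((n:ℝ) + ρ) := Real.rpow_pos_of_pos two_pos _
  have h2 : (0:ℝ) < (2:ℝ) ^ ((n:ℝ) + ρ + 1) := Real.rpow_pos_of_pos two_pos _
  exact div_pos (mul_pos (Real.log_pos one_lt_two) (hk_pos _ h1.le))
    (mul_pos h1 (hγ_pos _ h2))

lemma theta_eq' {k γ : ℝ → ℝ} {ρ : ℝ} (hk_pos : ∀ ξ : ℝ, 0 ≤ ξ → 0 < k ξ)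
    (hγ_pos : ∀ ξ : ℝ, 0 < ξ → 0 < γ ξ) (n : ℤ) :
    thetaF k γ ρ n = (k (2 * (2:ℝ) ^ ((n:ℝ) + ρ)) / k ((2:ℝ) ^ ((n:ℝ) + ρ))) *
      (γ (2 * (2:ℝ) ^ ((n:ℝ) + ρ)) / γ (4 * (2:ℝ) ^ ((n:ℝ) + ρ))) := by
  have hX : (0:ℝ) < (2:ℝ) ^ ((n:ℝ) + ρ) := Real.rpow_pos_of_pos two_pos _
  have e1 : ((n + 1 : ℤ) : ℝ) + ρ = ((n:ℝ) + ρ) + 1 := by push_cast; ring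
  have e2 : ((n + 1 : ℤ) : ℝ) + ρ + 1 = ((n:ℝ) + ρ + 1) + 1 := by push_cast; ring
  have e3 : (2:ℝ) ^ (((n:ℝ) + ρ) + 1) = 2 * (2:ℝ) ^ ((n:ℝ) + ρ) := rpow_succ _
  have e4 : (2:ℝ) ^ (((n:ℝ) + ρ + 1) + 1) = 4 * (2:ℝ) ^ ((n:ℝ) + ρ) := by
    rw [rpow_succ, rpow_succ]; ring
  have hk1 : (0:ℝ) < k ((2:ℝ) ^ ((n:ℝ) + ρ)) := hk_pos _ hX.le
  have hγ1 : (0:ℝ) < γ (2 * (2:ℝ) ^ ((n:ℝ) + ρ)) := hγ_pos _ (by positivity)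
  have hγ2 : (0:ℝ) < γ (4 * (2:ℝ) ^ ((n:ℝ) + ρ)) := hγ_pos _ (by positivity)
  have hL : (0:ℝ) < Real.log 2 := Real.log_pos one_lt_two
  unfold thetaF zeta
  rw [e1, e4, e3]
  field_simp

open Filter Topology Asymptotics

lemma theta_log_bound_neg {k γ : ℝ → ℝ} {ρ k₀ γ₀ αb βb Ck Cγ εk εγ : ℝ}
    (hk_pos : ∀ ξ : ℝ, 0 ≤ ξ → 0 < k ξ) (hγ_pos : ∀ ξ : ℝ, 0 < ξ → 0 < γ ξ)
    (hCk : 0 < Ck) (hCγ : 0 < Cγ) (hεk : 0 < εk) (hεγ : 0 < εγ)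
    (hbk : ∀ y : ℝ, 0 < y → y < εk → |Real.log (k y) - Real.log k₀| ≤ Ck * y ^ αb)
    (hbγ : ∀ y : ℝ, 0 < y → y < εγ → |Real.log (γ y) - Real.log γ₀| ≤ Cγ * y ^ βb)
    (hαb : 1 < αb) (hβb : 1 < βb) :
    ∃ C > 0, ∃ N : ℤ, ∀ n : ℤ, n ≤ N →
      |Real.log (thetaF k γ ρ n)| ≤ C * ((2:ℝ) ^ ((n:ℝ) + ρ)) ^ (min αb βb) := by
  set c := min αb βb with hc
  set ε' := min (min εk εγ) 1 with hε'
  have hε'0 : 0 < ε' := by positivity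
  obtain ⟨N, hN⟩ := exists_int_lt (Real.logb 2 ε' - ρ - 2)
  set C := Ck * ((2:ℝ) ^ αb + 1) + Cγ * ((2:ℝ) ^ βb + (4:ℝ) ^ βb) with hCdef
  have h2a : (0:ℝ) < (2:ℝ) ^ αb := Real.rpow_pos_of_pos two_pos _
  have h2b : (0:ℝ) < (2:ℝ) ^ βb := Real.rpow_pos_of_pos two_pos _
  have h4b : (0:ℝ) < (4:ℝ) ^ βb := Real.rpow_pos_of_pos (by norm_num) _
  refine ⟨C, by positivity, N, fun n hn => ?_⟩
  set X : ℝ := (2:ℝ) ^ ((n:ℝ) + ρ) with hXdef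
  have hX0 : 0 < X := Real.rpow_pos_of_pos two_pos _
  have h4X : 4 * X < ε' := by
    have : (2:ℝ) ^ ((n:ℝ) + ρ + 2) < (2:ℝ) ^ (Real.logb 2 ε') := by
      apply Real.rpow_lt_rpow_of_exponent_lt one_lt_two
      have : (n:ℝ) ≤ (N:ℝ) := by exact_mod_cast hn
      linarith
    rw [Real.rpow_logb two_pos (by norm_num) hε'0] at this
    calc 4 * X = (2:ℝ) ^ ((n:ℝ) + ρ + 2) := by
          rw [show (n:ℝ) + ρ + 2 = ((n:ℝ) + ρ + 1) + 1 by ring, rpow_succ, rpow_succ]; ring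
      _ < ε' := this
  have hX1 : X ≤ 1 := by nlinarith [h4X.le, hε'0, (min_le_right (min εk εγ) 1 : ε' ≤ 1)]
  have hXεk : ∀ y : ℝ, 0 < y → y ≤ 4 * X → y < εk := fun y _ hy =>
    lt_of_le_of_lt hy (lt_of_lt_of_le h4X ((min_le_left _ _).trans (min_le_left _ _)))
  have hXεγ : ∀ y : ℝ, 0 < y → y ≤ 4 * X → y < εγ := fun y _ hy =>
    lt_of_le_of_lt hy (lt_of_lt_of_le h4X ((min_le_left _ _).trans (min_le_right _ _)))
  have hk2X := hbk (2 * X) (by positivity) (hXεk _ (by positivity) (by linarith))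
  have hkX := hbk X hX0 (hXεk _ hX0 (by linarith))
  have hγ2X := hbγ (2 * X) (by positivity) (hXεγ _ (by positivity) (by linarith))
  have hγ4X := hbγ (4 * X) (by positivity) (hXεγ _ (by positivity) (by linarith))
  -- log decomposition
  have hkXp : 0 < k X := hk_pos _ hX0.le
  have hk2Xp : 0 < k (2 * X) := hk_pos _ (by positivity)
  have hγ2Xp : 0 < γ (2 * X) := hγ_pos _ (by positivity)
  have hγ4Xp : 0 < γ (4 * X) := hγ_pos _ (by positivity)
  have hdec : Real.log (thetaF k γ ρ n) =
      (Real.log (k (2 * X)) - Real.log k₀) - (Real.log (k X) - Real.log k₀) +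
      ((Real.log (γ (2 * X)) - Real.log γ₀) - (Real.log (γ (4 * X)) - Real.log γ₀)) := by
    rw [theta_eq' hk_pos hγ_pos n, ← hXdef,
      Real.log_mul (by positivity) (by positivity),
      Real.log_div (ne_of_gt hk2Xp) (ne_of_gt hkXp),
      Real.log_div (ne_of_gt hγ2Xp) (ne_of_gt hγ4Xp)]
    ring
  -- rpow facts
  have hmul2a : (2 * X) ^ αb = (2:ℝ) ^ αb * X ^ αb := Real.mul_rpow (by norm_num) hX0.le
  have hmul2b : (2 * X) ^ βb = (2:ℝ) ^ βb * X ^ βb := Real.mul_rpow (by norm_num) hX0.le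
  have hmul4b : (4 * X) ^ βb = (4:ℝ) ^ βb * X ^ βb := Real.mul_rpow (by norm_num) hX0.le
  have hXa : X ^ αb ≤ X ^ c := Real.rpow_le_rpow_of_exponent_ge hX0 hX1 (min_le_left _ _)
  have hXb : X ^ βb ≤ X ^ c := Real.rpow_le_rpow_of_exponent_ge hX0 hX1 (min_le_right _ _)
  have hXc0 : 0 ≤ X ^ c := (Real.rpow_pos_of_pos hX0 c).le
  rw [hdec]
  calc |(Real.log (k (2 * X)) - Real.log k₀) - (Real.log (k X) - Real.log k₀) +
      ((Real.log (γ (2 * X)) - Real.log γ₀) - (Real.log (γ (4 * X)) - Real.log γ₀))|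
      ≤ |Real.log (k (2 * X)) - Real.log k₀| + |Real.log (k X) - Real.log k₀| +
        (|Real.log (γ (2 * X)) - Real.log γ₀| + |Real.log (γ (4 * X)) - Real.log γ₀|) := by
        refine (abs_add_le _ _).trans ?_
        gcongr <;> exact abs_sub _ _
    _ ≤ (Ck * (2 * X) ^ αb + Ck * X ^ αb) + (Cγ * (2 * X) ^ βb + Cγ * (4 * X) ^ βb) := by
        gcongr
    _ = Ck * (2:ℝ) ^ αb * X ^ αb + Ck * X ^ αb +
        (Cγ * (2:ℝ) ^ βb * X ^ βb + Cγ * (4:ℝ) ^ βb * X ^ βb) := by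
        rw [hmul2a, hmul2b, hmul4b]; ring
    _ ≤ Ck * (2:ℝ) ^ αb * X ^ c + Ck * X ^ c +
        (Cγ * (2:ℝ) ^ βb * X ^ c + Cγ * (4:ℝ) ^ βb * X ^ c) := by gcongr
    _ = C * X ^ c := by rw [hCdef]; ring
lemma theta_log_bound_pos {k γ : ℝ → ℝ} {ρ p q : ℝ}
    (hk_pos : ∀ ξ : ℝ, 0 ≤ ξ → 0 < k ξ) (hγ_pos : ∀ ξ : ℝ, 0 < ξ → 0 < γ ξ)
    (hk_inf : Tendsto (fun ξ : ℝ => k ξ / ξ ^ p) atTop (𝓝 1))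
    (hγ_inf : Tendsto (fun ξ : ℝ => γ ξ / ξ ^ q) atTop (𝓝 1)) :
    ∃ M : ℝ, ∃ N₂ : ℤ, ∀ n : ℤ, N₂ ≤ n → |Real.log (thetaF k γ ρ n)| ≤ M := by
  obtain ⟨Rk, hRk1, hRk⟩ := ratio_bound_at_top hk_inf
  obtain ⟨Rγ, hRγ1, hRγ⟩ := ratio_bound_at_top hγ_inf
  set R := max Rk Rγ with hR
  have hR1 : (1:ℝ) ≤ R := le_trans hRk1 (le_max_left _ _)
  have hR0 : (0:ℝ) < R := lt_of_lt_of_le one_pos hR1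
  obtain ⟨N₂, hN₂⟩ := exists_int_gt (Real.logb 2 R - ρ)
  set mθ : ℝ := ((1/3) * (2:ℝ) ^ p) * ((1/3) * ((2:ℝ) ^ q / (4:ℝ) ^ q)) with hmθ
  set Mθ : ℝ := (3 * (2:ℝ) ^ p) * (3 * ((2:ℝ) ^ q / (4:ℝ) ^ q)) with hMθ
  have h2p : (0:ℝ) < (2:ℝ) ^ p := Real.rpow_pos_of_pos two_pos _
  have h2q : (0:ℝ) < (2:ℝ) ^ q := Real.rpow_pos_of_pos two_pos _
  have h4q : (0:ℝ) < (4:ℝ) ^ q := Real.rpow_pos_of_pos (by norm_num) _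
  have hmθ0 : 0 < mθ := by positivity
  have hMθ0 : 0 < Mθ := by positivity
  refine ⟨|Real.log mθ| + |Real.log Mθ|, N₂, fun n hn => ?_⟩
  set X : ℝ := (2:ℝ) ^ ((n:ℝ) + ρ) with hXdef
  have hX0 : 0 < X := Real.rpow_pos_of_pos two_pos _
  have hXR : R ≤ X := by
    have h1 : Real.logb 2 R ≤ (n:ℝ) + ρ := by
      have : (N₂:ℝ) ≤ (n:ℝ) := by exact_mod_cast hn
      linarith
    calc R = (2:ℝ) ^ (Real.logb 2 R) := (Real.rpow_logb two_pos (by norm_num) hR0).symm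
      _ ≤ X := Real.rpow_le_rpow_of_exponent_le one_lt_two.le h1
  have hXRk : ∀ y : ℝ, X ≤ y → Rk ≤ y := fun y hy =>
    le_trans (le_trans (le_max_left _ _) hXR) hy
  have hXRγ : ∀ y : ℝ, X ≤ y → Rγ ≤ y := fun y hy =>
    le_trans (le_trans (le_max_right _ _) hXR) hy
  have hkX := hRk X (hXRk X le_rfl)
  have hk2X := hRk (2 * X) (hXRk _ (by linarith))
  have hγ2X := hRγ (2 * X) (hXRγ _ (by linarith))
  have hγ4X := hRγ (4 * X) (hXRγ _ (by linarith))
  have hkXp : 0 < k X := hk_pos _ hX0.le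
  have hk2Xp : 0 < k (2 * X) := hk_pos _ (by positivity)
  have hγ2Xp : 0 < γ (2 * X) := hγ_pos _ (by positivity)
  have hγ4Xp : 0 < γ (4 * X) := hγ_pos _ (by positivity)
  have hmul2p : (2 * X) ^ p = (2:ℝ) ^ p * X ^ p := Real.mul_rpow (by norm_num) hX0.le
  have hmul2q : (2 * X) ^ q = (2:ℝ) ^ q * X ^ q := Real.mul_rpow (by norm_num) hX0.le
  have hmul4q : (4 * X) ^ q = (4:ℝ) ^ q * X ^ q := Real.mul_rpow (by norm_num) hX0.le
  have hXp0 : (0:ℝ) < X ^ p := Real.rpow_pos_of_pos hX0 _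
  have hXq0 : (0:ℝ) < X ^ q := Real.rpow_pos_of_pos hX0 _
  rw [hmul2p] at hk2X
  rw [hmul2q] at hγ2X
  rw [hmul4q] at hγ4X
  -- ratio bounds
  have hkr_up : k (2 * X) / k X ≤ 3 * (2:ℝ) ^ p := by
    rw [div_le_iff₀ hkXp]
    linarith [hk2X.2, mul_le_mul_of_nonneg_left hkX.1 (by positivity : (0:ℝ) ≤ 3 * (2:ℝ) ^ p)]
  have hkr_lo : (1/3) * (2:ℝ) ^ p ≤ k (2 * X) / k X := by
    rw [le_div_iff₀ hkXp]
    linarith [hk2X.1, mul_le_mul_of_nonneg_left hkX.2 (by positivity : (0:ℝ) ≤ (1/3) * (2:ℝ) ^ p)]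
  have hγr_up : γ (2 * X) / γ (4 * X) ≤ 3 * ((2:ℝ) ^ q / (4:ℝ) ^ q) := by
    rw [mul_div_assoc', div_le_div_iff₀ hγ4Xp h4q]
    linarith [mul_le_mul_of_nonneg_right hγ2X.2 h4q.le,
      mul_le_mul_of_nonneg_left hγ4X.1 (by positivity : (0:ℝ) ≤ 3 * (2:ℝ) ^ q)]
  have hγr_lo : (1/3) * ((2:ℝ) ^ q / (4:ℝ) ^ q) ≤ γ (2 * X) / γ (4 * X) := by
    rw [mul_div_assoc', div_le_div_iff₀ h4q hγ4Xp]
    linarith [mul_le_mul_of_nonneg_right hγ2X.1 h4q.le,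
      mul_le_mul_of_nonneg_left hγ4X.2 (by positivity : (0:ℝ) ≤ (1/3) * (2:ℝ) ^ q)]
  have hθ : thetaF k γ ρ n = (k (2 * X) / k X) * (γ (2 * X) / γ (4 * X)) := by
    rw [theta_eq' hk_pos hγ_pos n]
  have hθ0 : 0 < thetaF k γ ρ n := by rw [hθ]; positivity
  have hup : thetaF k γ ρ n ≤ Mθ := by
    rw [hθ, hMθ]
    exact mul_le_mul hkr_up hγr_up (by positivity) (by positivity)
  have hlo : mθ ≤ thetaF k γ ρ n := by
    rw [hθ, hmθ]
    exact mul_le_mul hkr_lo hγr_lo (by positivity) (by positivity)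
  have hlogup : Real.log (thetaF k γ ρ n) ≤ Real.log Mθ := (Real.log_le_log_iff hθ0 hMθ0).2 hup
  have hloglo : Real.log mθ ≤ Real.log (thetaF k γ ρ n) := (Real.log_le_log_iff hmθ0 hθ0).2 hlo
  rw [abs_le]
  constructor
  · have h1 := neg_abs_le (Real.log mθ)
    have h2 := abs_nonneg (Real.log Mθ)
    linarith
  · have h1 := le_abs_self (Real.log Mθ)
    have h2 := abs_nonneg (Real.log mθ)
    linarith

lemma tendsto_rpow_intCast_atBot {r : ℝ} (hr : 1 < r) :
    Tendsto (fun n : ℤ => r ^ ((n:ℝ))) atBot (𝓝 0) := by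
  have hr0 : 0 < r := lt_trans one_pos hr
  have hlog : 0 < Real.log r := Real.log_pos hr
  have h1 : Tendsto (fun n : ℤ => ((n:ℝ))) atBot atBot := tendsto_intCast_atBot_iff.2 tendsto_id
  have h2 : Tendsto (fun t : ℝ => Real.log r * t) atBot atBot :=
    Tendsto.const_mul_atBot hlog tendsto_id
  have h3 : Tendsto (fun t : ℝ => Real.exp (Real.log r * t)) atBot (𝓝 0) :=
    Real.tendsto_exp_atBot.comp h2
  have h4 := h3.comp h1
  refine h4.congr fun n => ?_
  simp only [Function.comp]
  rw [Real.rpow_def_of_pos hr0]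

set_option maxHeartbeats 2000000 in
/-- Absolute convergence of `Θ_ρ = Σ_{j∈ℤ} 2^{−j} ln θ_{j−1,ρ}`; for each `A ∈ ℝ`
the sequence `α_n(A,ρ)` is positive, solves `α_{n+1} = θ_{n,ρ} α_n²`, and satisfies
`α_n = 1 + (−A − Θ_ρ)·2^n + o(2^n)` as `n → −∞`; conversely every positive solution of the
recurrence is `α·(A,ρ)` for a unique `A`. -/
theorem stmt1
    (α β αb βb k₀ γ₀ : ℝ)
    (hα : α ∈ Set.Ioo (0:ℝ) 1) (hβ : β ∈ Set.Ioo (1:ℝ) 2)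
    (hαb : 1 < αb) (hβb : 1 < βb) (hk₀ : 0 < k₀) (hγ₀ : 0 < γ₀)
    (k γ : ℝ → ℝ)
    (hk_cont : ContinuousOn k (Set.Ici 0)) (hk_pos : ∀ ξ : ℝ, 0 ≤ ξ → 0 < k ξ)
    (hk_inf : Tendsto (fun ξ : ℝ => k ξ / ξ ^ (α + 1)) atTop (𝓝 1))
    (hk_0 : (fun ξ : ℝ => k ξ - k₀) =O[𝓝[>] 0] fun ξ : ℝ => ξ ^ αb)
    (hγ_cont : ContinuousOn γ (Set.Ioi 0)) (hγ_pos : ∀ ξ : ℝ, 0 < ξ → 0 < γ ξ)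
    (hγ_inf : Tendsto (fun ξ : ℝ => γ ξ / ξ ^ β) atTop (𝓝 1))
    (hγ_0 : (fun ξ : ℝ => γ ξ - γ₀) =O[𝓝[>] 0] fun ξ : ℝ => ξ ^ βb)
    (ρ : ℝ) (hρ : ρ ∈ Set.Ico (0:ℝ) 1) :
    Summable (fun j : ℤ => |(2:ℝ) ^ (-j) * Real.log (thetaF k γ ρ (j - 1))|) ∧
    (∀ A : ℝ,
      (∀ n : ℤ, 0 < alphaF k γ ρ A n) ∧
      (∀ n : ℤ, alphaF k γ ρ A (n + 1) = thetaF k γ ρ n * (alphaF k γ ρ A n) ^ 2) ∧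
      Tendsto (fun n : ℤ =>
          (alphaF k γ ρ A n -
            (1 + (-A - ∑' j : ℤ, (2:ℝ) ^ (-j) * Real.log (thetaF k γ ρ (j - 1))) * (2:ℝ) ^ n)) /
            (2:ℝ) ^ n) atBot (𝓝 0)) ∧
    (∀ α' : ℤ → ℝ, (∀ n : ℤ, 0 < α' n) →
      (∀ n : ℤ, α' (n + 1) = thetaF k γ ρ n * (α' n) ^ 2) →
      ∃! A : ℝ, α' = alphaF k γ ρ A) := by
  obtain ⟨hα0, hα1⟩ := hα
  obtain ⟨hβ1, hβ2⟩ := hβ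
  obtain ⟨hρ0, hρ1⟩ := hρ
  have hθpos : ∀ n : ℤ, 0 < thetaF k γ ρ n := fun n =>
    div_pos (mul_pos two_pos (zeta_pos' hk_pos hγ_pos _)) (zeta_pos' hk_pos hγ_pos n)
  set c := min αb βb with hc
  have hc1 : 1 < c := lt_min hαb hβb
  obtain ⟨Ck, hCk0, εk, hεk0, hbk⟩ :=
    log_bound_near_zero hk₀ (by linarith : (0:ℝ) < αb) (fun ξ hξ => hk_pos ξ hξ.le) hk_0
  obtain ⟨Cγ, hCγ0, εγ, hεγ0, hbγ⟩ :=
    log_bound_near_zero hγ₀ (by linarith : (0:ℝ) < βb) hγ_pos hγ_0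
  obtain ⟨CN, hCN0, N, hNEG⟩ :=
    theta_log_bound_neg hk_pos hγ_pos hCk0 hCγ0 hεk0 hεγ0 hbk hbγ hαb hβb (ρ := ρ)
  obtain ⟨M, N₂, hPOS⟩ := theta_log_bound_pos hk_pos hγ_pos hk_inf hγ_inf (ρ := ρ)
  have hM0 : 0 ≤ M := le_trans (abs_nonneg _) (hPOS N₂ le_rfl)
  set f : ℤ → ℝ := fun j => (2:ℝ) ^ (-j) * Real.log (thetaF k γ ρ (j - 1)) with hfdef
  set r : ℝ := (2:ℝ) ^ (c - 1) with hrdef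
  have hr1 : 1 < r := by
    rw [hrdef]
    exact Real.one_lt_rpow_iff_of_pos two_pos |>.2 (Or.inl ⟨one_lt_two, by linarith⟩)
  have hr0 : 0 < r := lt_trans one_pos hr1
  set D : ℝ := CN * (2:ℝ) ^ ((ρ - 1) * c) with hDdef
  have hD0 : 0 < D := mul_pos hCN0 (Real.rpow_pos_of_pos two_pos _)
  -- bound on f for j ≤ N + 1
  have hfb : ∀ j : ℤ, j ≤ N + 1 → |f j| ≤ D * r ^ ((j:ℝ)) := by
    intro j hj
    have hz : (0:ℝ) < (2:ℝ) ^ (-j) := zpow_pos two_pos _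
    have h1 : |f j| = (2:ℝ) ^ (-j) * |Real.log (thetaF k γ ρ (j - 1))| := by
      rw [hfdef]; dsimp only; rw [abs_mul, abs_of_pos hz]
    have h2 := hNEG (j - 1) (by omega)
    have e1 : (2:ℝ) ^ (-j) = (2:ℝ) ^ ((-j : ℤ) : ℝ) := (Real.rpow_intCast 2 (-j)).symm
    have e2 : ((2:ℝ) ^ ((((j - 1:ℤ)):ℝ) + ρ)) ^ c = (2:ℝ) ^ (((((j - 1:ℤ)):ℝ) + ρ) * c) :=
      (Real.rpow_mul two_pos.le _ _).symm
    calc |f j| ≤ (2:ℝ) ^ (-j) * (CN * ((2:ℝ) ^ ((((j - 1:ℤ)):ℝ) + ρ)) ^ c) := by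
          rw [h1]; exact mul_le_mul_of_nonneg_left h2 hz.le
      _ = CN * ((2:ℝ) ^ ((-j : ℤ) : ℝ) * (2:ℝ) ^ (((((j - 1:ℤ)):ℝ) + ρ) * c)) := by
          rw [← e1, e2]; ring
      _ = CN * (2:ℝ) ^ (((-j : ℤ) : ℝ) + ((((j - 1:ℤ)):ℝ) + ρ) * c) := by
          rw [Real.rpow_add two_pos]
      _ = CN * (2:ℝ) ^ ((ρ - 1) * c + (c - 1) * (j:ℝ)) := by
          congr 1; push_cast; ring
      _ = D * r ^ ((j:ℝ)) := by
          rw [Real.rpow_add two_pos, hDdef, hrdef, ← Real.rpow_mul two_pos.le]; ring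
  -- summability
  have hSumAbs : Summable (fun j : ℤ => |f j|) := by
    apply Summable.of_nat_of_neg
    · apply summable_of_isBigO_nat
        (summable_geometric_of_lt_one (by norm_num : (0:ℝ) ≤ 1/2) (by norm_num))
      rw [Asymptotics.isBigO_iff]
      refine ⟨M, ?_⟩
      rw [eventually_atTop]
      refine ⟨(N₂ + 1).toNat, fun m hm => ?_⟩
      have hm' : N₂ ≤ (m:ℤ) - 1 := by omega
      have hz : (0:ℝ) < (2:ℝ) ^ (-(m:ℤ)) := zpow_pos two_pos _
      have e : (2:ℝ) ^ (-(m:ℤ)) = (1/2:ℝ) ^ m := by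
        rw [zpow_neg, zpow_natCast, one_div, inv_pow]
      have hp : (0:ℝ) < (1/2:ℝ) ^ m := by positivity
      rw [Real.norm_eq_abs, Real.norm_eq_abs, abs_abs, abs_of_pos hp]
      calc |f (m:ℤ)| = (2:ℝ) ^ (-(m:ℤ)) * |Real.log (thetaF k γ ρ ((m:ℤ) - 1))| := by
            rw [hfdef]; dsimp only; rw [abs_mul, abs_of_pos hz]
        _ ≤ (2:ℝ) ^ (-(m:ℤ)) * M := mul_le_mul_of_nonneg_left (hPOS _ hm') hz.le
        _ = M * (1/2:ℝ) ^ m := by rw [e]; ring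
    · apply summable_of_isBigO_nat
        (summable_geometric_of_lt_one (inv_nonneg.2 hr0.le) (inv_lt_one_of_one_lt₀ hr1))
      rw [Asymptotics.isBigO_iff]
      refine ⟨D, ?_⟩
      rw [eventually_atTop]
      refine ⟨(-(N + 1)).toNat, fun m hm => ?_⟩
      have hm' : -(m:ℤ) ≤ N + 1 := by omega
      have hp : (0:ℝ) < (r⁻¹) ^ m := by positivity
      rw [Real.norm_eq_abs, Real.norm_eq_abs, abs_abs, abs_of_pos hp]
      have e : r ^ (((-(m:ℤ)):ℤ) : ℝ) = (r⁻¹) ^ m := by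
        push_cast
        rw [Real.rpow_neg hr0.le, Real.rpow_natCast, inv_pow]
      calc |f (-(m:ℤ))| ≤ D * r ^ (((-(m:ℤ)):ℤ) : ℝ) := hfb _ hm'
        _ = D * (r⁻¹) ^ m := by rw [e]
  have hSum : Summable f := hSumAbs.of_abs
  -- tail sums
  have hTailSum : ∀ n : ℤ, Summable (fun m : ℕ => f (n + 1 + m)) := by
    intro n
    have hinj : Function.Injective (fun m : ℕ => n + 1 + (m:ℤ)) := by
      intro a b hab; simp only at hab; omega
    exact hSum.comp_injective hinj
  set T : ℤ → ℝ := fun n => ∑' m : ℕ, f (n + 1 + m) with hTdef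
  have halpha : ∀ A : ℝ, ∀ n : ℤ,
      alphaF k γ ρ A n = Real.exp (-(A * (2:ℝ) ^ n) - (2:ℝ) ^ n * T n) := by
    intro A n
    unfold alphaF
    rw [← Real.exp_add]
    congr 1
    have h1 : ∑' m : ℕ, (2:ℝ) ^ (-(n + 1 + (m:ℤ))) * Real.log (thetaF k γ ρ (n + (m:ℤ)))
        = T n := by
      apply tsum_congr
      intro m
      have e : n + (m:ℤ) = (n + 1 + (m:ℤ)) - 1 := by ring
      rw [e]
    rw [h1]; ring
  have halphapos : ∀ A : ℝ, ∀ n : ℤ, 0 < alphaF k γ ρ A n := fun A n => by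
    rw [halpha]; exact Real.exp_pos _
  have hT_rec : ∀ n : ℤ, T n = f (n + 1) + T (n + 1) := by
    intro n
    have h0 := Summable.tsum_eq_zero_add (hTailSum n)
    rw [hTdef]
    dsimp only
    rw [h0]
    congr 1
    · norm_num
    · apply tsum_congr; intro m; congr 1; push_cast; ring
  have hrecA : ∀ A : ℝ, ∀ n : ℤ,
      alphaF k γ ρ A (n + 1) = thetaF k γ ρ n * (alphaF k γ ρ A n) ^ 2 := by
    intro A n
    rw [halpha, halpha, ← Real.exp_log (hθpos n), sq, ← Real.exp_add, ← Real.exp_add]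
    congr 1
    have hf1 : f (n + 1) = (2:ℝ) ^ (-(n + 1)) * Real.log (thetaF k γ ρ n) := by
      rw [hfdef]; dsimp only; norm_num
    have h2 : (2:ℝ) ^ (n + 1) = 2 * (2:ℝ) ^ n := by
      rw [zpow_add₀ (two_ne_zero : (2:ℝ) ≠ 0), zpow_one]; ring
    have h3 : (2:ℝ) ^ n * (2:ℝ) ^ (-(n + 1)) = 1/2 := by
      rw [← zpow_add₀ (two_ne_zero : (2:ℝ) ≠ 0)]
      have e : n + -(n + 1) = -1 := by ring
      rw [e]; norm_num
    rw [hT_rec n, hf1]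
    linear_combination (-A - T (n + 1)) * h2 + 2 * Real.log (thetaF k γ ρ n) * h3
  -- splitting of the full sum
  have hHeadSum : ∀ n : ℤ, Summable (fun m : ℕ => f (n - m)) := by
    intro n
    have hinj : Function.Injective (fun m : ℕ => n - (m:ℤ)) := by
      intro a b hab; simp only at hab; omega
    exact hSum.comp_injective hinj
  have hHeadSumAbs : ∀ n : ℤ, Summable (fun m : ℕ => |f (n - m)|) := by
    intro n
    have hinj : Function.Injective (fun m : ℕ => n - (m:ℤ)) := by
      intro a b hab; simp only at hab; omega
    exact hSumAbs.comp_injective hinj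
  have hsplit : ∀ n : ℤ, (∑' j : ℤ, f j) = T n + ∑' m : ℕ, f (n - m) := by
    intro n
    set s : Set ℤ := {j : ℤ | n + 1 ≤ j} with hs
    have hg : Summable (s.indicator f) := hSum.indicator _
    have hh : Summable (sᶜ.indicator f) := hSum.indicator _
    have h1 : T n = ∑' j : ℤ, s.indicator f j := by
      rw [hTdef]; dsimp only
      have hinj : Function.Injective (fun m : ℕ => n + 1 + (m:ℤ)) := by
        intro a b hab; simp only at hab; omega
      rw [← hinj.tsum_eq (f := s.indicator f) ?_]
      · apply tsum_congr
        intro m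
        rw [Set.indicator_of_mem (by simp only [hs, Set.mem_setOf_eq]; omega : n + 1 + (m:ℤ) ∈ s)]
      · intro j hj
        have hjs : j ∈ s := by
          by_contra hns
          exact hj (Set.indicator_of_notMem hns f)
        have hjs' : n + 1 ≤ j := hjs
        exact ⟨(j - (n + 1)).toNat, by simp only; omega⟩
    have h2 : (∑' m : ℕ, f (n - m)) = ∑' j : ℤ, sᶜ.indicator f j := by
      have hinj : Function.Injective (fun m : ℕ => n - (m:ℤ)) := by
        intro a b hab; simp only at hab; omega
      rw [← hinj.tsum_eq (f := sᶜ.indicator f) ?_]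
      · apply tsum_congr
        intro m
        rw [Set.indicator_of_mem]
        simp only [hs, Set.mem_compl_iff, Set.mem_setOf_eq]
        omega
      · intro j hj
        have hjs : j ∈ sᶜ := by
          by_contra hns
          rw [Set.notMem_compl_iff] at hns
          exact hj (Set.indicator_of_notMem (by simpa using hns) f)
        have hjs' : ¬ (n + 1 ≤ j) := hjs
        exact ⟨(n - j).toNat, by simp only; omega⟩
    have h3 : (∑' j : ℤ, f j) = ∑' j : ℤ, (s.indicator f j + sᶜ.indicator f j) :=
      tsum_congr fun j => (congrFun (Set.indicator_self_add_compl s f) j).symm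
    rw [h3, Summable.tsum_add hg hh, ← h1, ← h2]
  -- head bound and limit of T
  set D' : ℝ := D * (1 - r⁻¹)⁻¹ with hD'def
  have hrinv1 : r⁻¹ < 1 := inv_lt_one_of_one_lt₀ hr1
  have hrinv0 : (0:ℝ) ≤ r⁻¹ := inv_nonneg.2 hr0.le
  have hHbound : ∀ n : ℤ, n ≤ N → |∑' m : ℕ, f (n - m)| ≤ D' * r ^ ((n:ℝ)) := by
    intro n hn
    have hmaj : Summable (fun m : ℕ => D * r ^ ((n:ℝ)) * (r⁻¹) ^ m) :=
      (summable_geometric_of_lt_one hrinv0 hrinv1).mul_left _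
    have hle : ∀ m : ℕ, |f (n - m)| ≤ D * r ^ ((n:ℝ)) * (r⁻¹) ^ m := by
      intro m
      have h1 := hfb (n - m) (by omega)
      have e : r ^ (((n - (m:ℤ)):ℤ) : ℝ) = r ^ ((n:ℝ)) * (r⁻¹) ^ m := by
        push_cast
        rw [Real.rpow_sub hr0, Real.rpow_natCast, div_eq_mul_inv, inv_pow]
      rw [e, ← mul_assoc] at h1
      exact h1
    calc |∑' m : ℕ, f (n - m)| ≤ ∑' m : ℕ, |f (n - m)| := by
          have hs1 : Summable fun m : ℕ => ‖f (n - m)‖ := by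
            simpa [Real.norm_eq_abs] using hHeadSumAbs n
          simpa [Real.norm_eq_abs] using norm_tsum_le_tsum_norm hs1
      _ ≤ ∑' m : ℕ, D * r ^ ((n:ℝ)) * (r⁻¹) ^ m := Summable.tsum_le_tsum hle (hHeadSumAbs n) hmaj
      _ = D * r ^ ((n:ℝ)) * (1 - r⁻¹)⁻¹ := by
          rw [tsum_mul_left, tsum_geometric_of_lt_one hrinv0 hrinv1]
      _ = D' * r ^ ((n:ℝ)) := by rw [hD'def]; ring
  have hrtend : Tendsto (fun n : ℤ => D' * r ^ ((n:ℝ))) atBot (𝓝 0) := by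
    have := (tendsto_rpow_intCast_atBot hr1).const_mul D'
    simpa using this
  have hTtend : Tendsto T atBot (𝓝 (∑' j : ℤ, f j)) := by
    rw [← tendsto_sub_nhds_zero_iff]
    apply squeeze_zero_norm' (a := fun n : ℤ => D' * r ^ ((n:ℝ)))
    · filter_upwards [eventually_le_atBot N] with n hn
      have : T n - (∑' j : ℤ, f j) = -(∑' m : ℕ, f (n - m)) := by
        rw [hsplit n]; ring
      rw [Real.norm_eq_abs, this, abs_neg]
      exact hHbound n hn
    · exact hrtend
  have h2pow : Tendsto (fun n : ℤ => (2:ℝ) ^ n) atBot (𝓝 0) := by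
    have := tendsto_rpow_intCast_atBot one_lt_two
    refine this.congr fun n => ?_
    exact Real.rpow_intCast 2 n
  -- Part 3: asymptotics
  have hasym : ∀ A : ℝ, Tendsto (fun n : ℤ =>
      (alphaF k γ ρ A n - (1 + (-A - ∑' j : ℤ, f j) * (2:ℝ) ^ n)) / (2:ℝ) ^ n)
      atBot (𝓝 0) := by
    intro A
    set Θ : ℝ := ∑' j : ℤ, f j with hΘdef
    have hv : Tendsto (fun n : ℤ => (-A - T n) * (2:ℝ) ^ n) atBot (𝓝 0) := by
      have := ((tendsto_const_nhds (x := -A)).sub hTtend).mul h2pow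
      simpa using this
    have hv1 : ∀ᶠ n : ℤ in atBot, |(-A - T n) * (2:ℝ) ^ n| ≤ 1 := by
      have := Metric.tendsto_nhds.mp hv 1 one_pos
      filter_upwards [this] with n h
      rw [Real.dist_eq, sub_zero] at h
      exact h.le
    apply squeeze_zero_norm' (a := fun n : ℤ => (A + T n) ^ 2 * (2:ℝ) ^ n + |T n - Θ|)
    · filter_upwards [hv1] with n hn
      have hp : (0:ℝ) < (2:ℝ) ^ n := zpow_pos two_pos n
      set v : ℝ := (-A - T n) * (2:ℝ) ^ n with hvdef
      have hvd : -(A * (2:ℝ) ^ n) - (2:ℝ) ^ n * T n = v := by rw [hvdef]; ring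
      rw [halpha, hvd, Real.norm_eq_abs, abs_div, abs_of_pos hp, div_le_iff₀ hp]
      have step1 : |Real.exp v - (1 + (-A - Θ) * (2:ℝ) ^ n)|
          ≤ |Real.exp v - 1 - v| + |v - (-A - Θ) * (2:ℝ) ^ n| := by
        have e : Real.exp v - (1 + (-A - Θ) * (2:ℝ) ^ n)
            = (Real.exp v - 1 - v) + (v - (-A - Θ) * (2:ℝ) ^ n) := by ring
        rw [e]; exact abs_add_le _ _
      have step2 : |Real.exp v - 1 - v| ≤ v ^ 2 := Real.abs_exp_sub_one_sub_id_le hn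
      have step3 : |v - (-A - Θ) * (2:ℝ) ^ n| = |T n - Θ| * (2:ℝ) ^ n := by
        have e : v - (-A - Θ) * (2:ℝ) ^ n = (Θ - T n) * (2:ℝ) ^ n := by rw [hvdef]; ring
        rw [e, abs_mul, abs_of_pos hp, abs_sub_comm]
      have step4 : v ^ 2 = (A + T n) ^ 2 * (2:ℝ) ^ n * (2:ℝ) ^ n := by rw [hvdef]; ring
      calc |Real.exp v - (1 + (-A - Θ) * (2:ℝ) ^ n)|
          ≤ v ^ 2 + |T n - Θ| * (2:ℝ) ^ n := by linarith [step1, step2, step3.le, step3.ge]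
        _ = ((A + T n) ^ 2 * (2:ℝ) ^ n + |T n - Θ|) * (2:ℝ) ^ n := by rw [step4]; ring
    · have h1 : Tendsto (fun n : ℤ => (A + T n) ^ 2 * (2:ℝ) ^ n) atBot (𝓝 0) := by
        have := (((tendsto_const_nhds (x := A)).add hTtend).pow 2).mul h2pow
        simpa using this
      have h2 : Tendsto (fun n : ℤ => |T n - Θ|) atBot (𝓝 0) := by
        have := (hTtend.sub (tendsto_const_nhds (x := Θ))).abs
        simpa using this
      have := h1.add h2
      simpa using this
  -- Part 4: converse
  have hconv : ∀ α' : ℤ → ℝ, (∀ n : ℤ, 0 < α' n) →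
      (∀ n : ℤ, α' (n + 1) = thetaF k γ ρ n * (α' n) ^ 2) →
      ∃! A : ℝ, α' = alphaF k γ ρ A := by
    intro α' hpos' hrec'
    set A : ℝ := -Real.log (α' 0) - T 0 with hAdef
    have hbase : α' 0 = alphaF k γ ρ A 0 := by
      rw [halpha A 0, zpow_zero]
      have e : -(A * 1) - 1 * T 0 = Real.log (α' 0) := by rw [hAdef]; ring
      rw [e, Real.exp_log (hpos' 0)]
    have key : ∀ n : ℤ, α' n = alphaF k γ ρ A n := by
      intro n
      induction n using Int.induction_on with
      | zero => exact hbase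
      | succ i ih => rw [hrec' (i:ℤ), hrecA A (i:ℤ), ih]
      | pred i ih =>
        have h1 := hrec' (-(i:ℤ) - 1)
        have h2 := hrecA A (-(i:ℤ) - 1)
        have e : -(i:ℤ) - 1 + 1 = -(i:ℤ) := by ring
        rw [e] at h1 h2
        have h3 : thetaF k γ ρ (-(i:ℤ) - 1) * α' (-(i:ℤ) - 1) ^ 2
            = thetaF k γ ρ (-(i:ℤ) - 1) * alphaF k γ ρ A (-(i:ℤ) - 1) ^ 2 := by
          rw [← h1, ← h2, ih]
        have h4 := mul_left_cancel₀ (ne_of_gt (hθpos _)) h3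
        have h5 : (α' (-(i:ℤ) - 1) - alphaF k γ ρ A (-(i:ℤ) - 1)) *
            (α' (-(i:ℤ) - 1) + alphaF k γ ρ A (-(i:ℤ) - 1)) = 0 := by
          linear_combination h4
        rcases mul_eq_zero.1 h5 with h | h
        · exact sub_eq_zero.1 h
        · exfalso
          have p1 := hpos' (-(i:ℤ) - 1)
          have p2 := halphapos A (-(i:ℤ) - 1)
          linarith
    refine ⟨A, funext key, fun B hB => ?_⟩
    have h0 : alphaF k γ ρ B 0 = α' 0 := by rw [hB]
    rw [halpha B 0, zpow_zero] at h0
    have h1 : -(B * 1) - 1 * T 0 = Real.log (α' 0) := by rw [← h0, Real.log_exp]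
    rw [hAdef]
    linarith
  exact ⟨hSumAbs, fun A => ⟨halphapos A, hrecA A, hasym A⟩, hconv⟩
end
end

section
/- For every A ∈ ℝ and ρ ∈ [0,1), the sequence α_n(A,ρ) satisfies 2^{α−β+1}·e^{A·2^n}·α_n(A,ρ) → 1 as n → ∞; that is, α_n(A,ρ) is asymptotic to e^{−A·2^n}/2^{α−β+1} as n → ∞. -/
open Filter Topology Asymptotics MeasureTheory

noncomputable section

/-- `α_n(A,ρ) ~ e^{−A·2^n} / 2^{α−β+1}` as `n → ∞`, i.e.
`2^{α−β+1}·e^{A·2^n}·α_n(A,ρ) → 1`. -/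
theorem stmt2
    (α β αb βb k₀ γ₀ : ℝ)
    (hα : α ∈ Set.Ioo (0:ℝ) 1) (hβ : β ∈ Set.Ioo (1:ℝ) 2)
    (hαb : 1 < αb) (hβb : 1 < βb) (hk₀ : 0 < k₀) (hγ₀ : 0 < γ₀)
    (k γ : ℝ → ℝ)
    (hk_cont : ContinuousOn k (Set.Ici 0)) (hk_pos : ∀ ξ : ℝ, 0 ≤ ξ → 0 < k ξ)
    (hk_inf : Tendsto (fun ξ : ℝ => k ξ / ξ ^ (α + 1)) atTop (𝓝 1))
    (hk_0 : (fun ξ : ℝ => k ξ - k₀) =O[𝓝[>] 0] fun ξ : ℝ => ξ ^ αb)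
    (hγ_cont : ContinuousOn γ (Set.Ioi 0)) (hγ_pos : ∀ ξ : ℝ, 0 < ξ → 0 < γ ξ)
    (hγ_inf : Tendsto (fun ξ : ℝ => γ ξ / ξ ^ β) atTop (𝓝 1))
    (hγ_0 : (fun ξ : ℝ => γ ξ - γ₀) =O[𝓝[>] 0] fun ξ : ℝ => ξ ^ βb)
    (ρ : ℝ) (hρ : ρ ∈ Set.Ico (0:ℝ) 1) (A : ℝ) :
    Tendsto (fun n : ℤ =>
        (2:ℝ) ^ (α - β + 1) * Real.exp (A * (2:ℝ) ^ n) * alphaF k γ ρ A n) atTop (𝓝 1) := by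
  obtain ⟨hα0, hα1⟩ := hα
  obtain ⟨hβ1, hβ2⟩ := hβ
  have two_pos' : (0:ℝ) < 2 := by norm_num
  have hln2 : (0:ℝ) < Real.log 2 := Real.log_pos one_lt_two
  set X : ℤ → ℝ := fun n => (2:ℝ) ^ ((n:ℝ) + ρ) with hXdef
  have hXpos : ∀ n : ℤ, 0 < X n := fun n => Real.rpow_pos_of_pos two_pos' _
  have hXsucc : ∀ n : ℤ, X (n+1) = 2 * X n := by
    intro n
    have h1 : ((n+1 : ℤ):ℝ) + ρ = ((n:ℝ) + ρ) + 1 := by push_cast; ring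
    simp only [hXdef]
    rw [h1, Real.rpow_add_one (by norm_num : (2:ℝ) ≠ 0)]
    ring
  have hζeq : ∀ n : ℤ, zeta k γ ρ n = Real.log 2 * k (X n) / (X n * γ (X (n+1))) := by
    intro n
    have h1 : ((n+1:ℤ):ℝ) + ρ = (n:ℝ) + ρ + 1 := by push_cast; ring
    simp only [zeta, hXdef, h1]
  have hk_pos' : ∀ n : ℤ, 0 < k (X n) := fun n => hk_pos _ (hXpos n).le
  have hγ_pos' : ∀ n : ℤ, 0 < γ (X n) := fun n => hγ_pos _ (hXpos n)
  set f : ℤ → ℝ := fun n => k (X n) / (X n) ^ (α + 1) with hfdef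
  set g : ℤ → ℝ := fun n => γ (X (n+1)) / (X (n+1)) ^ β with hgdef
  have hfpos : ∀ n, 0 < f n := fun n => div_pos (hk_pos' n) (Real.rpow_pos_of_pos (hXpos n) _)
  have hgpos : ∀ n, 0 < g n := fun n => div_pos (hγ_pos' (n+1)) (Real.rpow_pos_of_pos (hXpos (n+1)) _)
  have hkX : ∀ n, k (X n) = f n * (X n) ^ (α+1) := by
    intro n
    simp only [hfdef]
    exact (div_mul_cancel₀ _ (Real.rpow_pos_of_pos (hXpos n) _).ne').symm
  have hγX : ∀ n, γ (X (n+1)) = g n * (X (n+1)) ^ β := by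
    intro n
    simp only [hgdef]
    exact (div_mul_cancel₀ _ (Real.rpow_pos_of_pos (hXpos (n+1)) _).ne').symm
  have hXtop : Tendsto X atTop atTop := by
    have h1 : Tendsto (fun n : ℤ => (n:ℝ) + ρ) atTop atTop :=
      tendsto_atTop_add_const_right _ ρ tendsto_intCast_atTop_atTop
    have h2 : Tendsto (fun x : ℝ => (2:ℝ) ^ x) atTop atTop := by
      have h3 : Tendsto (fun x : ℝ => Real.exp (Real.log 2 * x)) atTop atTop :=
        Real.tendsto_exp_atTop.comp (Tendsto.const_mul_atTop hln2 tendsto_id)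
      refine h3.congr (fun x => ?_)
      rw [Real.rpow_def_of_pos two_pos']
    exact h2.comp h1
  have hshift : Tendsto (fun n : ℤ => n + 1) atTop atTop :=
    tendsto_atTop_add_const_right _ 1 tendsto_id
  have hf : Tendsto f atTop (𝓝 1) := hk_inf.comp hXtop
  have hg : Tendsto g atTop (𝓝 1) := hγ_inf.comp (hXtop.comp hshift)
  have hζpos : ∀ n, 0 < zeta k γ ρ n := by
    intro n
    rw [hζeq n]
    exact div_pos (mul_pos hln2 (hk_pos' n)) (mul_pos (hXpos n) (hγ_pos' (n+1)))
  have hθpos : ∀ n, 0 < thetaF k γ ρ n := by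
    intro n
    exact div_pos (mul_pos two_pos' (hζpos (n+1))) (hζpos n)
  have hθeq : ∀ n : ℤ, thetaF k γ ρ n =
      (f (n+1) * g n) / (f n * g (n+1)) * (2:ℝ) ^ (α - β + 1) := by
    intro n
    have e3 : (2:ℝ)^(α+1) = (2:ℝ)^(α-β+1) * (2:ℝ)^β := by
      rw [← Real.rpow_add two_pos']
      ring_nf
    have e1 : (X (n+1)) ^ (α+1) = (2:ℝ)^(α-β+1) * (2:ℝ)^β * (X n)^(α+1) := by
      rw [hXsucc n, Real.mul_rpow (by norm_num) (hXpos n).le, ← e3]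
    have e4 : (X (n+1)) ^ β = (2:ℝ)^β * (X n)^β := by
      rw [hXsucc n, Real.mul_rpow (by norm_num) (hXpos n).le]
    have e2 : (X (n+1+1)) ^ β = (2:ℝ)^β * (X (n+1))^β := by
      rw [hXsucc (n+1), Real.mul_rpow (by norm_num) (hXpos (n+1)).le]
    have hP : ((X n) ^ (α+1)) ≠ 0 := (Real.rpow_pos_of_pos (hXpos n) _).ne'
    have hQ : ((X n) ^ β) ≠ 0 := (Real.rpow_pos_of_pos (hXpos n) _).ne'
    have hd : ((2:ℝ) ^ β) ≠ 0 := (Real.rpow_pos_of_pos two_pos' _).ne'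
    have hXn : X n ≠ 0 := (hXpos n).ne'
    have hfn : f n ≠ 0 := (hfpos n).ne'
    have hgn1 : g (n+1) ≠ 0 := (hgpos (n+1)).ne'
    have hgn : g n ≠ 0 := (hgpos n).ne'
    rw [thetaF, hζeq n, hζeq (n+1), hkX n, hkX (n+1), hγX n, hγX (n+1), e1, e2, e4,
      hXsucc n]
    field_simp
  have hθlim : Tendsto (thetaF k γ ρ) atTop (𝓝 ((2:ℝ) ^ (α - β + 1))) := by
    have h1 : Tendsto (fun n : ℤ => (f (n+1) * g n) / (f n * g (n+1))) atTop (𝓝 1) := by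
      have := (((hf.comp hshift).mul hg).div (hf.mul (hg.comp hshift)) (by norm_num))
      simp only [mul_one, div_one] at this
      exact this
    have h2 := h1.mul_const ((2:ℝ) ^ (α - β + 1))
    rw [one_mul] at h2
    exact h2.congr (fun n => (hθeq n).symm)
  set L : ℝ := (α - β + 1) * Real.log 2 with hLdef
  have hθp : (0:ℝ) < (2:ℝ) ^ (α - β + 1) := Real.rpow_pos_of_pos two_pos' _
  have hlog : Tendsto (fun n : ℤ => Real.log (thetaF k γ ρ n)) atTop (𝓝 L) := by
    have h1 := (Real.continuousAt_log hθp.ne').tendsto.comp hθlim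
    rwa [Real.log_rpow two_pos'] at h1
  have G : Summable (fun m : ℕ => (1/2:ℝ)^m) :=
    summable_geometric_of_lt_one (by norm_num) (by norm_num)
  have hsum1 : ∑' m : ℕ, (1/2:ℝ) * (1/2)^m = 1 := by
    rw [tsum_mul_left, tsum_geometric_of_lt_one (by norm_num) (by norm_num)]
    norm_num
  have hc : ∀ m : ℕ, (2:ℝ)^(-(1+(m:ℤ))) = (1/2) * (1/2:ℝ)^m := by
    intro m
    rw [zpow_neg, show (1+(m:ℤ)) = ((m+1:ℕ):ℤ) by push_cast; ring, zpow_natCast]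
    rw [pow_succ, mul_inv, one_div, inv_pow]
    ring
  have hS : Tendsto (fun n : ℤ =>
      ∑' m : ℕ, (1/2:ℝ) * (1/2)^m * Real.log (thetaF k γ ρ (n + (m:ℤ)))) atTop (𝓝 L) := by
    rw [Metric.tendsto_atTop] at hlog ⊢
    intro ε hε
    obtain ⟨N, hN⟩ := hlog (ε/2) (by linarith)
    refine ⟨N, fun n hn => ?_⟩
    have hbound : ∀ m : ℕ, |Real.log (thetaF k γ ρ (n + (m:ℤ))) - L| ≤ ε/2 := by
      intro m
      have h1 : N ≤ n + (m:ℤ) := hn.trans (le_add_of_nonneg_right (Int.natCast_nonneg m))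
      have h2 := hN (n + (m:ℤ)) h1
      rw [Real.dist_eq] at h2
      exact h2.le
    have hs1norm : Summable (fun m : ℕ =>
        ‖(1/2:ℝ) * (1/2)^m * (Real.log (thetaF k γ ρ (n + (m:ℤ))) - L)‖) := by
      refine Summable.of_nonneg_of_le (fun m => norm_nonneg _) (fun m => ?_)
        ((G.mul_left (1/2)).mul_right (ε/2))
      rw [Real.norm_eq_abs, abs_mul, abs_of_nonneg (by positivity : (0:ℝ) ≤ (1/2:ℝ)*(1/2)^m)]
      exact mul_le_mul_of_nonneg_left (hbound m) (by positivity)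
    have hs1 : Summable (fun m : ℕ =>
        (1/2:ℝ) * (1/2)^m * (Real.log (thetaF k γ ρ (n + (m:ℤ))) - L)) := hs1norm.of_norm
    have hsL : Summable (fun m : ℕ => (1/2:ℝ) * (1/2)^m * L) := (G.mul_left (1/2)).mul_right L
    have hs2 : Summable (fun m : ℕ =>
        (1/2:ℝ) * (1/2)^m * Real.log (thetaF k γ ρ (n + (m:ℤ)))) := by
      have heq : (fun m : ℕ => (1/2:ℝ) * (1/2)^m * Real.log (thetaF k γ ρ (n + (m:ℤ))))
          = fun m : ℕ => (1/2:ℝ) * (1/2)^m * (Real.log (thetaF k γ ρ (n + (m:ℤ))) - L)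
            + (1/2:ℝ) * (1/2)^m * L := by
        funext m; ring
      rw [heq]
      exact hs1.add hsL
    have hLsum : ∑' m : ℕ, (1/2:ℝ) * (1/2)^m * L = L := by
      rw [tsum_mul_right, hsum1, one_mul]
    have key : (∑' m : ℕ, (1/2:ℝ) * (1/2)^m * Real.log (thetaF k γ ρ (n + (m:ℤ)))) - L
        = ∑' m : ℕ, (1/2:ℝ) * (1/2)^m * (Real.log (thetaF k γ ρ (n + (m:ℤ))) - L) := by
      have h := Summable.tsum_sub hs2 hsL
      rw [hLsum] at h
      rw [← h]
      exact tsum_congr (fun m => by ring)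
    rw [Real.dist_eq, key]
    calc |∑' m : ℕ, (1/2:ℝ) * (1/2)^m * (Real.log (thetaF k γ ρ (n + (m:ℤ))) - L)|
        ≤ ∑' m : ℕ, ‖(1/2:ℝ) * (1/2)^m * (Real.log (thetaF k γ ρ (n + (m:ℤ))) - L)‖ :=
          norm_tsum_le_tsum_norm hs1norm
      _ ≤ ∑' m : ℕ, (1/2:ℝ) * (1/2)^m * (ε/2) := by
          refine Summable.tsum_le_tsum (fun m => ?_) hs1norm ((G.mul_left (1/2)).mul_right (ε/2))
          rw [Real.norm_eq_abs, abs_mul,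
            abs_of_nonneg (by positivity : (0:ℝ) ≤ (1/2:ℝ)*(1/2)^m)]
          exact mul_le_mul_of_nonneg_left (hbound m) (by positivity)
      _ = ε/2 := by rw [tsum_mul_right, hsum1, one_mul]
      _ < ε := by linarith
  have halpha : ∀ n : ℤ, (2:ℝ)^(α-β+1) * Real.exp (A * (2:ℝ)^n) * alphaF k γ ρ A n
      = (2:ℝ)^(α-β+1) *
        Real.exp (-(∑' m : ℕ, (1/2:ℝ) * (1/2)^m * Real.log (thetaF k γ ρ (n + (m:ℤ))))) := by
    intro n
    unfold alphaF
    have h2n : ∀ m : ℕ, (2:ℝ)^(n:ℤ) * ((2:ℝ)^(-(n+1+(m:ℤ))) * Real.log (thetaF k γ ρ (n + (m:ℤ))))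
        = (1/2:ℝ) * (1/2)^m * Real.log (thetaF k γ ρ (n + (m:ℤ))) := by
      intro m
      rw [← mul_assoc, ← zpow_add₀ (two_ne_zero), show n + -(n+1+(m:ℤ)) = -(1+(m:ℤ)) by ring,
        hc m]
    have hT : (2:ℝ)^(n:ℤ) * (∑' m : ℕ, (2:ℝ)^(-(n+1+(m:ℤ))) * Real.log (thetaF k γ ρ (n + (m:ℤ))))
        = ∑' m : ℕ, (1/2:ℝ) * (1/2)^m * Real.log (thetaF k γ ρ (n + (m:ℤ))) := by
      rw [← tsum_mul_left]
      exact tsum_congr h2n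
    rw [hT, mul_assoc, ← Real.exp_add, ← Real.exp_add, add_neg_cancel_left]
  have hval : (2:ℝ)^(α-β+1) * Real.exp (-L) = 1 := by
    rw [hLdef, Real.rpow_def_of_pos two_pos', ← Real.exp_add, mul_comm (Real.log 2),
      add_neg_cancel, Real.exp_zero]
  have hfinal : Tendsto (fun n : ℤ => (2:ℝ)^(α-β+1) *
      Real.exp (-(∑' m : ℕ, (1/2:ℝ) * (1/2)^m * Real.log (thetaF k γ ρ (n + (m:ℤ))))))
      atTop (𝓝 1) := by
    have h1 : Tendsto (fun n : ℤ =>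
        Real.exp (-(∑' m : ℕ, (1/2:ℝ) * (1/2)^m * Real.log (thetaF k γ ρ (n + (m:ℤ))))))
        atTop (𝓝 (Real.exp (-L))) := (Real.continuous_exp.tendsto _).comp hS.neg
    have h2 := h1.const_mul ((2:ℝ)^(α-β+1))
    rwa [hval] at h2
  exact hfinal.congr (fun n => (halpha n).symm)
end
end
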